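/- In the reduction of Lemma 6 (from Restricted Min-Power Edge-Cover to Min-Cost Edge-Cover): if I' ⊆ E' is a U-cover in G', I = ⋃_{e'∈I'} I(e'), and π(v) = max{p_I(v), ℓ_v}, then I is a U-cover in G, π is a feasible solution (π(v) ≥ ℓ_v for v ∈ U and every edge uv ∈ I satisfies π(u), π(v) ≥ c(uv)), and π(V) ≤ c'(I'). -/

import Mathlib

open Finset

variable {V : Type*} [Fintype V] [DecidableEq V]

/-- The set of edges of `J` incident to the node `v`. -/
def inc (J : Finset (Sym2 V)) (v : V) : Finset (Sym2 V) := J.filter (fun e => v ∈ e)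

/-- The power of the node `v` w.r.t. the edge set `J`:
the maximum cost of an edge of `J` incident to `v` (`0` if `v` is isolated). -/
def pw (c : Sym2 V → NNReal) (J : Finset (Sym2 V)) (v : V) : NNReal := (inc J v).sup c

/-- The degree of the node `v` in the graph `(V, J)`. -/
def deg (J : Finset (Sym2 V)) (v : V) : ℕ := (inc J v).card
/-- Reduction from Restricted Min-Power Edge-Cover to Min-Cost Edge-Cover (Lemma 6):
if `I'` is a `U`-cover in the auxiliary graph `G'` (edges `e'` with endpoint set
`ends e'\ ⊆ U`, underlying edge sets `Imap e' ⊆ E` covering `ends e'`, and cost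
`c' e' = ∑_{v∈ends e'} ℓ v + D(Imap e')`), then `I = ⋃_{e'∈I'} Imap e'` covers `U` in `G`,
the assignment `π(v) = max{p_I(v), ℓ v}` is feasible (`π(v) ≥ ℓ v` on `U` and
`π(u), π(v) ≥ c(uv)` for every `uv ∈ I`), and `π(V) ≤ c'(I')`. -/
theorem stmt16 {ι : Type*} [DecidableEq ι]
    (E : Finset (Sym2 V)) (c : Sym2 V → NNReal) (U : Finset V) (ℓ : V → ℝ)
    (hℓ : ∀ v, 0 ≤ ℓ v) (hℓ0 : ∀ v, v ∉ U → ℓ v = 0)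
    (hℓmin : ∀ u ∈ U, ∃ e ∈ E, u ∈ e ∧ (c e : ℝ) ≤ ℓ u)
    (I' : Finset ι) (ends : ι → Finset V) (Imap : ι → Finset (Sym2 V)) (c' : ι → ℝ)
    (hends : ∀ e' ∈ I', ends e' ⊆ U)
    (hsub : ∀ e' ∈ I', Imap e' ⊆ E)
    (hIcov : ∀ e' ∈ I', ∀ v ∈ ends e', ∃ f ∈ Imap e', v ∈ f)
    (hc' : ∀ e' ∈ I', c' e' =
      (∑ v ∈ ends e', ℓ v) + ∑ v, max ((pw c (Imap e') v : ℝ) - ℓ v) 0)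
    (hcov : ∀ u ∈ U, ∃ e' ∈ I', u ∈ ends e')
    (I : Finset (Sym2 V)) (hI : I = I'.biUnion Imap)
    (π : V → ℝ) (hπ : ∀ v, π v = max ((pw c I v : ℝ)) (ℓ v)) :
    (∀ u ∈ U, ∃ e ∈ I, u ∈ e) ∧
      (∀ v ∈ U, ℓ v ≤ π v) ∧
      (∀ e ∈ I, ∀ v ∈ e, (c e : ℝ) ≤ π v) ∧
      ∑ v, π v ≤ ∑ e' ∈ I', c' e' := by
  subst hI
  set J := I'.biUnion Imap with hJ
  refine ⟨?_, ?_, ?_, ?_⟩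
  · intro u hu
    obtain ⟨e', he', hue⟩ := hcov u hu
    obtain ⟨f, hf, hvf⟩ := hIcov e' he' u hue
    exact ⟨f, Finset.mem_biUnion.2 ⟨e', he', hf⟩, hvf⟩
  · intro v _; rw [hπ]; exact le_max_right _ _
  · intro e he v hve
    rw [hπ v]
    refine le_trans ?_ (le_max_left _ _)
    exact_mod_cast NNReal.coe_le_coe.2 (Finset.le_sup (Finset.mem_filter.2 ⟨he, hve⟩))
  · have key1 : ∀ v : V, ℓ v ≤ ∑ e' ∈ I', (if v ∈ ends e' then ℓ v else 0) := by
      intro v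
      by_cases hv : v ∈ U
      · obtain ⟨e', he', hve⟩ := hcov v hv
        refine Finset.single_le_sum (f := fun e' => if v ∈ ends e' then ℓ v else 0)
          (fun i _ => by split_ifs; exacts [hℓ v, le_rfl]) he' |>.trans_eq' ?_
        simp [hve]
      · rw [hℓ0 v hv]
        exact Finset.sum_nonneg fun i _ => by positivity
    have key2 : ∀ v : V, max ((pw c J v : ℝ) - ℓ v) 0 ≤
        ∑ e' ∈ I', max ((pw c (Imap e') v : ℝ) - ℓ v) 0 := by
      intro v
      rcases Finset.eq_empty_or_nonempty (inc J v) with hemp | hne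
      · have : pw c J v = 0 := by rw [pw, hemp, Finset.sup_empty]; rfl
        rw [this]
        refine le_trans ?_ (Finset.sum_nonneg fun i _ => le_max_right _ _)
        simp [hℓ v]
      · obtain ⟨f, hf, hsup⟩ := Finset.exists_mem_eq_sup _ hne c
        have hfJ : f ∈ J := (Finset.mem_filter.1 hf).1
        obtain ⟨e', he', hfe'⟩ := Finset.mem_biUnion.1 hfJ
        have hle : (pw c J v : ℝ) ≤ (pw c (Imap e') v : ℝ) := by
          have hpf : pw c J v = c f := hsup
          rw [hpf]
          exact_mod_cast NNReal.coe_le_coe.2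
            (Finset.le_sup (Finset.mem_filter.2 ⟨hfe', (Finset.mem_filter.1 hf).2⟩))
        calc max ((pw c J v : ℝ) - ℓ v) 0
            ≤ max ((pw c (Imap e') v : ℝ) - ℓ v) 0 := max_le_max (by linarith) le_rfl
          _ ≤ ∑ e' ∈ I', max ((pw c (Imap e') v : ℝ) - ℓ v) 0 :=
              Finset.single_le_sum (f := fun i => max ((pw c (Imap i) v : ℝ) - ℓ v) 0)
                (fun i _ => le_max_right _ _) he'
    have hπeq : ∀ v, π v = ℓ v + max ((pw c J v : ℝ) - ℓ v) 0 := by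
      intro v
      rw [hπ]
      rcases le_total ((pw c J v : ℝ)) (ℓ v) with h | h
      · rw [max_eq_right h, max_eq_right (by linarith), add_zero]
      · rw [max_eq_left h, max_eq_left (by linarith)]; ring
    calc ∑ v, π v = ∑ v, ℓ v + ∑ v, max ((pw c J v : ℝ) - ℓ v) 0 := by
          rw [← Finset.sum_add_distrib]; exact Finset.sum_congr rfl fun v _ => hπeq v
      _ ≤ (∑ v, ∑ e' ∈ I', (if v ∈ ends e' then ℓ v else 0))
          + ∑ v, ∑ e' ∈ I', max ((pw c (Imap e') v : ℝ) - ℓ v) 0 :=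
          add_le_add (Finset.sum_le_sum fun v _ => key1 v)
            (Finset.sum_le_sum fun v _ => key2 v)
      _ = ∑ e' ∈ I', ((∑ v ∈ ends e', ℓ v) + ∑ v, max ((pw c (Imap e') v : ℝ) - ℓ v) 0) := by
          rw [Finset.sum_comm, Finset.sum_comm (s := Finset.univ) (t := I'),
            ← Finset.sum_add_distrib]
          refine Finset.sum_congr rfl fun e' _ => ?_
          congr 1
          rw [Finset.sum_ite_mem, Finset.univ_inter]
      _ = ∑ e' ∈ I', c' e' := Finset.sum_congr rfl fun e' he' => (hc' e' he').symm
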